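/- Let X = X_{a,b} be the Bourgain–Delbaen space, with the associated tree T, compact space K = W^T and elements g_k ∈ K. Let k ∈ ℕ, f = g_k, s ∈ ℕ and x ∈ P_s(X). For each infinite branch B of T (infinite 0–1 sequence) let n(B,f) be the least n such that R(f(I(B,n))) ≤ d_s, where I(B,n) is the initial segment of B of length n. Let {N_i} be a maximal antichain of T among the nodes N that satisfy: length(N) ≤ n(B,f) for every infinite branch B passing through N. Then the collection {N_i} is finite and e_k^*(x) = Σ_i ⟨f, N_i, x⟩. -/

import Mathlib

open MeasureTheory Set Ordinal Filter
open scoped Classical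

/-- `ℓ∞ = ℓ∞(ℕ)`. -/
noncomputable abbrev linf : Type := lp (fun _ : ℕ => ℝ) ⊤

/-- The `k`-th coordinate functional `e_k^*` on `ℓ∞`. -/
noncomputable def coordFn (k : ℕ) : linf →L[ℝ] ℝ :=
  LinearMap.mkContinuous
    { toFun := fun x => x k
      map_add' := fun _ _ => rfl
      map_smul' := fun _ _ => rfl }
    1 (fun x => by
      rw [one_mul]
      exact lp.norm_apply_le_norm (E := fun _ : ℕ => ℝ) ENNReal.top_ne_zero x k)

/-- The `k`-th coordinate vector `e_k` of `ℓ∞`. -/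
noncomputable def ek (k : ℕ) : linf := lp.single ⊤ k (1 : ℝ)

/-- `E_n = span{e_k : 1 ≤ k ≤ d n}`. -/
noncomputable def Esub (d : ℕ → ℕ) (n : ℕ) : Submodule ℝ linf :=
  Submodule.span ℝ {x : linf | ∃ k : ℕ, 1 ≤ k ∧ k ≤ d n ∧ x = ek k}

/-- All the data of the Bourgain–Delbaen construction: the constants `a`, `b`, `λ`, the
dimensions `d n`, the enumeration `φ` of tuples `(σ',i,m,σ'',j)`, the coordinate projections
`π_m`, the embeddings `i_{m,n}` and the limit projections `P_m`, together with their defining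
properties. -/
structure BDSetup where
  a : ℝ
  b : ℝ
  lam : ℝ
  hb : 0 < b
  hba : b < a
  ha : a < 1
  hlam : 1 < lam
  hineq : a + 2 * b * lam < lam
  /-- the dimensions -/
  d : ℕ → ℕ
  hd1 : d 1 = 1
  hd2 : d 2 = 2
  /-- the enumeration of the tuples `(σ', i, m, σ'', j)` -/
  φ : ℕ → ℤ × ℕ × ℕ × ℤ × ℕ
  hφ : ∀ n : ℕ, 2 ≤ n → Set.BijOn φ {k : ℕ | d n < k ∧ k ≤ d (n + 1)}
      {q : ℤ × ℕ × ℕ × ℤ × ℕ | (q.1 = 1 ∨ q.1 = -1) ∧ (q.2.2.2.1 = 1 ∨ q.2.2.2.1 = -1) ∧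
        1 ≤ q.2.2.1 ∧ q.2.2.1 < n ∧ 1 ≤ q.2.1 ∧ q.2.1 ≤ d q.2.2.1 ∧
        1 ≤ q.2.2.2.2 ∧ q.2.2.2.2 ≤ d n}
  /-- the coordinate projections `π_m` -/
  pi : ℕ → (linf →L[ℝ] linf)
  hpi : ∀ (m : ℕ) (x : linf) (k : ℕ), pi m x k = if 1 ≤ k ∧ k ≤ d m then x k else 0
  /-- the embeddings `i_{m,n}` -/
  iMap : ℕ → ℕ → (linf →L[ℝ] linf)
  hi12 : ∀ x : linf, x ∈ Esub d 1 → iMap 1 2 x = x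
  histep : ∀ n : ℕ, 2 ≤ n → ∀ x : linf, x ∈ Esub d n →
    iMap n (n + 1) x = x + ∑ k ∈ Finset.Ioc (d n) (d (n + 1)),
      (a * ((φ k).1 : ℝ) * x (φ k).2.1 +
        b * (((φ k).2.2.2.1 : ℤ) : ℝ) *
          ((x - iMap (φ k).2.2.1 n (pi (φ k).2.2.1 x)) (φ k).2.2.2.2)) • ek k
  hicomp : ∀ m n : ℕ, 1 ≤ m → m < n → ∀ x : linf, x ∈ Esub d m →
    iMap m (n + 1) x = iMap n (n + 1) (iMap m n x)
  hinorm : ∀ m n : ℕ, 1 ≤ m → m < n → ∀ x : linf, x ∈ Esub d m → ‖iMap m n x‖ ≤ lam * ‖x‖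
  /-- the coordinatewise limit projections `P_m` -/
  P : ℕ → (linf →L[ℝ] linf)
  hP0 : P 0 = 0
  hPlim : ∀ m : ℕ, 1 ≤ m → ∀ (x : linf) (k : ℕ),
    Filter.Tendsto (fun n => (iMap m n (pi m x)) k) Filter.atTop (nhds (P m x k))
  hPproj : ∀ m : ℕ, (P m).comp (P m) = P m
  hPnorm : ∀ m : ℕ, ‖P m‖ ≤ lam

/-- The Bourgain–Delbaen space `X = X_{a,b}`, the closed linear span of `⋃ m, P_m(E_m)`. -/
noncomputable def Xsub (S : BDSetup) : Submodule ℝ linf :=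
  (Submodule.span ℝ (⋃ m ∈ {m : ℕ | 1 ≤ m}, (S.P m) '' (Esub S.d m))).topologicalClosure

/-- The restriction (quotient) map `Q : ℓ∞^* → X^*`. -/
noncomputable def QMap (S : BDSetup) (f : linf →L[ℝ] ℝ) : (Xsub S) →L[ℝ] ℝ :=
  f.comp (Xsub S).subtypeL

/-- The images `Q e_k^*` of the coordinate functionals in `X^*`. -/
noncomputable def Qe (S : BDSetup) (k : ℕ) : (Xsub S) →L[ℝ] ℝ := QMap S (coordFn k)

/-- One step of the recursive definition of `g_k`: from the value `(c, ω·m + ℓ)` at a node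
(coded as `(c, m, ℓ)`) to the value at its two immediate successors. -/
noncomputable def bdStep (S : BDSetup) : (ℝ × ℕ × ℕ) → Bool → (ℝ × ℕ × ℕ) :=
  fun w δ =>
    if w.2.2 ≤ 2 then (0, w.2.1, 0)
    else
      if δ = false then
        (if (S.φ w.2.2).1 = -1 then -S.a else S.a, w.2.1, (S.φ w.2.2).2.1)
      else
        (if (S.φ w.2.2).2.2.2.1 = -1 then -S.b else S.b,
          max w.2.1 (S.φ w.2.2).2.2.1, (S.φ w.2.2).2.2.2.2)

/-- The walk along a node of the binary tree (a finite list of 0–1 choices, read from the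
root). -/
noncomputable def bdWalk (S : BDSetup) : (ℝ × ℕ × ℕ) → List Bool → (ℝ × ℕ × ℕ)
  | w, [] => w
  | w, δ :: N => bdWalk S (bdStep S w δ) N

/-- The element `g_k` of `K`, here recorded as a function from nodes to `(c, m, j)`,
coding the value `(c, ω·m + j) ∈ W`. -/
noncomputable def gElem (S : BDSetup) (k : ℕ) : List Bool → (ℝ × ℕ × ℕ) :=
  fun N => bdWalk S (1, 0, k) N

/-- The evaluation `⟨f, N, x⟩` of `x` by `f` at a node `N`:
`(∏_{t=1}^{n} V(f(I(N,t)))) · ((I − P_{Q̂(f(N))})^* e_{R(f(N))}^*)(x)`. -/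
noncomputable def nodeVal (S : BDSetup) (f : List Bool → ℝ × ℕ × ℕ) (N : List Bool)
    (x : linf) : ℝ :=
  (∏ t ∈ Finset.range N.length, (f (N.take (t + 1))).1) *
    coordFn (f N).2.2 ((ContinuousLinearMap.id ℝ linf - S.P (f N).2.1) x)

/-- A node `N` satisfies `length N ≤ n(B,f)` for every branch `B` through `N` iff every
proper initial segment of `N` carries an `R`-value exceeding `d s`. -/
def GoodNode (S : BDSetup) (f : List Bool → ℝ × ℕ × ℕ) (s : ℕ) (N : List Bool) : Prop :=
  ∀ t : ℕ, t < N.length → S.d s < (f (N.take t)).2.2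

section Lemmas

theorem coordFn_apply (k : ℕ) (x : linf) : coordFn k x = x k := rfl

theorem linf_ext {x y : linf} (h : ∀ t, x t = y t) : x = y := lp.ext (funext h)

theorem ek_apply (k t : ℕ) : (ek k : linf) t = if t = k then 1 else 0 := by
  rcases eq_or_ne t k with h | h
  · subst h; rw [if_pos rfl]; exact lp.single_apply_self _ _ _
  · rw [if_neg h]; exact lp.single_apply_ne _ _ _ h

variable (S : BDSetup)

theorem d_one_lt : ∀ n, 1 ≤ n → 1 ≤ S.d n ∧ S.d n < S.d (n + 1) := by
  intro n hn
  induction n, hn using Nat.le_induction with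
  | base => refine ⟨by rw [S.hd1], by rw [S.hd1, S.hd2]; norm_num⟩
  | succ n hn ih =>
    have h1 : 1 ≤ S.d (n + 1) := ih.1.trans ih.2.le
    refine ⟨h1, ?_⟩
    have hn2 : 2 ≤ n + 1 := by omega
    have hbij := S.hφ (n + 1) hn2
    have hq : ((1 : ℤ), (1 : ℕ), (1 : ℕ), (1 : ℤ), (1 : ℕ)) ∈
        {q : ℤ × ℕ × ℕ × ℤ × ℕ | (q.1 = 1 ∨ q.1 = -1) ∧ (q.2.2.2.1 = 1 ∨ q.2.2.2.1 = -1) ∧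
          1 ≤ q.2.2.1 ∧ q.2.2.1 < n + 1 ∧ 1 ≤ q.2.1 ∧ q.2.1 ≤ S.d q.2.2.1 ∧
          1 ≤ q.2.2.2.2 ∧ q.2.2.2.2 ≤ S.d (n + 1)} := by
      refine ⟨Or.inl rfl, Or.inl rfl, le_refl _, by show (1:ℕ) < n + 1; omega, le_refl _, ?_, le_refl _, h1⟩
      rw [S.hd1]
    obtain ⟨kk, hkk, -⟩ := hbij.surjOn hq
    exact lt_of_lt_of_le hkk.1 hkk.2

theorem d_pos {n : ℕ} (hn : 1 ≤ n) : 1 ≤ S.d n := (d_one_lt S n hn).1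

theorem d_mono {m n : ℕ} (hm : 1 ≤ m) (h : m ≤ n) : S.d m ≤ S.d n := by
  induction n, h using Nat.le_induction with
  | base => exact le_refl _
  | succ n hn ih => exact ih.trans (d_one_lt S n (hm.trans hn)).2.le

theorem d_ge {n : ℕ} (hn : 1 ≤ n) : n ≤ S.d n := by
  induction n, hn using Nat.le_induction with
  | base => rw [S.hd1]
  | succ n hn ih => exact Nat.succ_le_of_lt (lt_of_le_of_lt ih (d_one_lt S n hn).2)

theorem exists_interval {ℓ : ℕ} (h : 2 < ℓ) : ∃ n, 2 ≤ n ∧ S.d n < ℓ ∧ ℓ ≤ S.d (n + 1) := by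
  classical
  set P : ℕ → Prop := fun t => S.d t < ℓ with hP
  have h2 : P 2 := by simp only [P, S.hd2]; exact h
  set n := Nat.findGreatest P ℓ with hn
  have hn2 : 2 ≤ n := Nat.le_findGreatest (by omega) h2
  have hdn : P n := Nat.findGreatest_spec (m := 2) (by omega) h2
  refine ⟨n, hn2, hdn, ?_⟩
  by_contra hc
  push_neg at hc
  have hnl : n < ℓ := lt_of_le_of_lt (d_ge S (by omega)) hdn
  exact Nat.findGreatest_is_greatest (lt_add_one n) (by omega) hc

theorem phi_spec {ℓ n : ℕ} (hn : 2 ≤ n) (h1 : S.d n < ℓ) (h2 : ℓ ≤ S.d (n + 1)) :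
    ((S.φ ℓ).1 = 1 ∨ (S.φ ℓ).1 = -1) ∧ ((S.φ ℓ).2.2.2.1 = 1 ∨ (S.φ ℓ).2.2.2.1 = -1) ∧
      1 ≤ (S.φ ℓ).2.2.1 ∧ (S.φ ℓ).2.2.1 < n ∧ 1 ≤ (S.φ ℓ).2.1 ∧
      (S.φ ℓ).2.1 ≤ S.d (S.φ ℓ).2.2.1 ∧ 1 ≤ (S.φ ℓ).2.2.2.2 ∧ (S.φ ℓ).2.2.2.2 ≤ S.d n :=
  (S.hφ n hn).mapsTo ⟨h1, h2⟩

end Lemmas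
section Lemmas2

theorem Esub_coord_eq_zero {d : ℕ → ℕ} {n : ℕ} {x : linf} (hx : x ∈ Esub d n) {t : ℕ}
    (ht : ¬(1 ≤ t ∧ t ≤ d n)) : x t = 0 := by
  induction hx using Submodule.span_induction with
  | mem y hy =>
    obtain ⟨k, hk1, hk2, rfl⟩ := hy
    rw [ek_apply, if_neg]
    rintro rfl
    exact ht ⟨hk1, hk2⟩
  | zero => exact congrFun (lp.coeFn_zero (fun _ : ℕ => ℝ) ⊤) t
  | add y z _ _ hy hz =>
    rw [show ((y + z : linf) t) = y t + z t from congrFun (lp.coeFn_add y z) t, hy, hz, add_zero]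
  | smul c y _ hy =>
    rw [show ((c • y : linf) t) = c • y t from congrFun (lp.coeFn_smul c y) t, hy, smul_zero]

theorem Esub_mono {d : ℕ → ℕ} {n n' : ℕ} (h : d n ≤ d n') : Esub d n ≤ Esub d n' := by
  apply Submodule.span_mono
  rintro x ⟨k, h1, h2, rfl⟩
  exact ⟨k, h1, h2.trans h, rfl⟩

theorem ek_mem {d : ℕ → ℕ} {n k : ℕ} (h1 : 1 ≤ k) (h2 : k ≤ d n) : ek k ∈ Esub d n :=
  Submodule.subset_span ⟨k, h1, h2, rfl⟩

variable (S : BDSetup)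

theorem pi_repr (m : ℕ) (x : linf) :
    S.pi m x = ∑ k ∈ Finset.Icc 1 (S.d m), x k • ek k := by
  apply linf_ext
  intro t
  rw [S.hpi m x t]
  have hsum : ((∑ k ∈ Finset.Icc 1 (S.d m), x k • ek k : linf) t)
      = ∑ k ∈ Finset.Icc 1 (S.d m), (x k • ek k : linf) t := by
    rw [lp.coeFn_sum]
    exact Finset.sum_apply t _ _
  rw [hsum]
  have : ∀ k ∈ Finset.Icc 1 (S.d m), ((x k • ek k : linf) t) = if t = k then x k else 0 := by
    intro k _
    rw [show ((x k • ek k : linf) t) = x k • (ek k : linf) t from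
      congrFun (lp.coeFn_smul _ _) t, ek_apply]
    simp [mul_ite]
  rw [Finset.sum_congr rfl this, Finset.sum_ite_eq]
  simp [Finset.mem_Icc]

theorem pi_mem (m : ℕ) (x : linf) : S.pi m x ∈ Esub S.d m := by
  rw [pi_repr]
  exact Submodule.sum_mem _ fun k hk => Submodule.smul_mem _ _
    (ek_mem (Finset.mem_Icc.mp hk).1 (Finset.mem_Icc.mp hk).2)

theorem pi_idem (m : ℕ) (x : linf) : S.pi m (S.pi m x) = S.pi m x := by
  apply linf_ext
  intro t
  rw [S.hpi, S.hpi]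
  split <;> rfl

end Lemmas2
section Lemmas3
variable (S : BDSetup)

theorem step_apply {n : ℕ} (hn : 2 ≤ n) {x : linf} (hx : x ∈ Esub S.d n) (t : ℕ) :
    S.iMap n (n + 1) x t = x t +
      if S.d n < t ∧ t ≤ S.d (n + 1) then
        S.a * ((S.φ t).1 : ℝ) * x (S.φ t).2.1 +
          S.b * (((S.φ t).2.2.2.1 : ℤ) : ℝ) *
            ((x - S.iMap (S.φ t).2.2.1 n (S.pi (S.φ t).2.2.1 x)) (S.φ t).2.2.2.2)
      else 0 := by
  rw [S.histep n hn x hx]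
  have h1 : ((x + ∑ k ∈ Finset.Ioc (S.d n) (S.d (n + 1)),
      (S.a * ((S.φ k).1 : ℝ) * x (S.φ k).2.1 +
        S.b * (((S.φ k).2.2.2.1 : ℤ) : ℝ) *
          ((x - S.iMap (S.φ k).2.2.1 n (S.pi (S.φ k).2.2.1 x)) (S.φ k).2.2.2.2)) • ek k : linf) t)
      = x t + ∑ k ∈ Finset.Ioc (S.d n) (S.d (n + 1)),
        ((S.a * ((S.φ k).1 : ℝ) * x (S.φ k).2.1 +
        S.b * (((S.φ k).2.2.2.1 : ℤ) : ℝ) *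
          ((x - S.iMap (S.φ k).2.2.1 n (S.pi (S.φ k).2.2.1 x)) (S.φ k).2.2.2.2)) • ek k : linf) t := by
    rw [show ∀ u v : linf, (u + v) t = u t + v t from fun u v => congrFun (lp.coeFn_add u v) t]
    congr 1
    rw [lp.coeFn_sum]
    exact Finset.sum_apply t _ _
  rw [h1]
  congr 1
  have h2 : ∀ k ∈ Finset.Ioc (S.d n) (S.d (n + 1)),
      ((S.a * ((S.φ k).1 : ℝ) * x (S.φ k).2.1 +
        S.b * (((S.φ k).2.2.2.1 : ℤ) : ℝ) *
          ((x - S.iMap (S.φ k).2.2.1 n (S.pi (S.φ k).2.2.1 x)) (S.φ k).2.2.2.2)) • ek k : linf) t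
      = if t = k then (S.a * ((S.φ k).1 : ℝ) * x (S.φ k).2.1 +
        S.b * (((S.φ k).2.2.2.1 : ℤ) : ℝ) *
          ((x - S.iMap (S.φ k).2.2.1 n (S.pi (S.φ k).2.2.1 x)) (S.φ k).2.2.2.2)) else 0 := by
    intro k _
    rw [show ∀ (c : ℝ) (v : linf), (c • v) t = c • v t from
      fun c v => congrFun (lp.coeFn_smul c v) t, ek_apply]
    simp [mul_ite]
  rw [Finset.sum_congr rfl h2, Finset.sum_ite_eq]
  simp only [Finset.mem_Ioc]

theorem step_coord {n : ℕ} (hn : 1 ≤ n) {x : linf} (hx : x ∈ Esub S.d n) {t : ℕ}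
    (ht : t ≤ S.d n) : S.iMap n (n + 1) x t = x t := by
  rcases eq_or_lt_of_le hn with h1 | h1
  · cases h1; rw [S.hi12 x hx]
  · rw [step_apply S h1 hx, if_neg (by omega), add_zero]

theorem step_mem {n : ℕ} (hn : 1 ≤ n) {x : linf} (hx : x ∈ Esub S.d n) :
    S.iMap n (n + 1) x ∈ Esub S.d (n + 1) := by
  have hmono : Esub S.d n ≤ Esub S.d (n + 1) := Esub_mono (d_mono S hn (Nat.le_succ n))
  rcases eq_or_lt_of_le hn with h1 | h1
  · cases h1; rw [S.hi12 x hx]; exact hmono hx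
  · rw [S.histep n h1 x hx]
    refine Submodule.add_mem _ (hmono hx) (Submodule.sum_mem _ fun j hj => ?_)
    rw [Finset.mem_Ioc] at hj
    exact Submodule.smul_mem _ _ (ek_mem (by have := d_pos S hn; omega) hj.2)

theorem iMap_mem {m n : ℕ} (hm : 1 ≤ m) (h : m < n) {x : linf} (hx : x ∈ Esub S.d m) :
    S.iMap m n x ∈ Esub S.d n := by
  induction n, h using Nat.le_induction with
  | base => exact step_mem S hm hx
  | succ n hn ih =>
    rw [S.hicomp m n hm (by omega) x hx]
    exact step_mem S (by omega) ih

theorem iMap_coord_stab {m n N : ℕ} (hm : 1 ≤ m) (hmn : m < n) (hN : n ≤ N) {x : linf}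
    (hx : x ∈ Esub S.d m) {t : ℕ} (ht : t ≤ S.d n) : S.iMap m N x t = S.iMap m n x t := by
  induction N, hN using Nat.le_induction with
  | base => rfl
  | succ N hN ih =>
    rw [S.hicomp m N hm (by omega) x hx,
      step_coord S (by omega) (iMap_mem S hm (by omega) hx)
        (ht.trans (d_mono S (by omega) hN)), ih]

theorem iMap_comp_eq {m m' n : ℕ} (hm : 1 ≤ m) (h1 : m < m') (h2 : m' < n) {x : linf}
    (hx : x ∈ Esub S.d m) : S.iMap m n x = S.iMap m' n (S.iMap m m' x) := by
  induction n, h2 using Nat.le_induction with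
  | base => exact S.hicomp m m' hm h1 x hx
  | succ n hn ih =>
    rw [S.hicomp m n hm (by omega) x hx, ih,
      ← S.hicomp m' n (by omega) (by omega) _ (iMap_mem S hm h1 hx)]

end Lemmas3
section Lemmas4
variable (S : BDSetup)

theorem P_coord {m n : ℕ} (hm : 1 ≤ m) (hmn : m < n) {t : ℕ} (ht : t ≤ S.d n) (x : linf) :
    S.P m x t = S.iMap m n (S.pi m x) t := by
  have hlim := S.hPlim m hm x t
  have hconst : Filter.Tendsto (fun N : ℕ => (S.iMap m N (S.pi m x) : linf) t)
      Filter.atTop (nhds ((S.iMap m n (S.pi m x) : linf) t)) := by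
    apply Filter.Tendsto.congr' _ tendsto_const_nhds
    filter_upwards [Filter.eventually_ge_atTop n] with N hN
    exact (iMap_coord_stab S hm hmn hN (pi_mem S m x) ht).symm
  exact tendsto_nhds_unique hlim hconst

theorem P_coord_low {m t : ℕ} (hm : 1 ≤ m) (h1 : 1 ≤ t) (ht : t ≤ S.d m) (x : linf) :
    S.P m x t = x t := by
  rw [P_coord S hm (Nat.lt_succ_self m) (ht.trans (d_mono S hm (Nat.le_succ m))) x,
    step_coord S hm (pi_mem S m x) ht, S.hpi, if_pos ⟨h1, ht⟩]

theorem P_congr {m : ℕ} (hm : 1 ≤ m) {x y : linf} (h : S.pi m x = S.pi m y) :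
    S.P m x = S.P m y := by
  apply linf_ext
  intro t
  have h1 := S.hPlim m hm x t
  have h2 := S.hPlim m hm y t
  rw [h] at h1
  exact tendsto_nhds_unique h1 h2

theorem P_pi (m : ℕ) (hm : 1 ≤ m) (x : linf) : S.P m x = S.P m (S.pi m x) :=
  P_congr S hm (pi_idem S m x).symm

theorem P_zero_apply (x : linf) (t : ℕ) : S.P 0 x t = 0 := by
  rw [S.hP0]
  exact congrFun (lp.coeFn_zero (fun _ : ℕ => ℝ) ⊤) t

theorem PP {m' m : ℕ} (hm' : 1 ≤ m') (hm : 1 ≤ m) (x : linf) :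
    S.P m' (S.P m x) = S.P (min m' m) x := by
  rcases lt_trichotomy m m' with h | h | h
  · -- m < m' : P m' (P m x) = P m x
    have hmin : min m' m = m := by omega
    rw [hmin]
    have hpix : S.pi m' (S.P m x) = S.iMap m m' (S.pi m x) := by
      apply linf_ext
      intro t
      rw [S.hpi]
      split
      · exact P_coord S hm h (by omega) x
      · exact (Esub_coord_eq_zero (iMap_mem S hm h (pi_mem S m x)) (by omega)).symm
    apply linf_ext
    intro t
    have h1 := S.hPlim m' hm' (S.P m x) t
    rw [hpix] at h1
    have h2 : Filter.Tendsto (fun N : ℕ => (S.iMap m' N (S.iMap m m' (S.pi m x)) : linf) t)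
        Filter.atTop (nhds (S.P m x t)) := by
      apply Filter.Tendsto.congr' _ (S.hPlim m hm x t)
      filter_upwards [Filter.eventually_gt_atTop m'] with N hN
      exact congrFun (congrArg _ (iMap_comp_eq S hm h hN (pi_mem S m x))) t
    exact tendsto_nhds_unique h1 h2
  · subst h
    rw [min_self]
    have := S.hPproj m
    calc S.P m (S.P m x) = ((S.P m).comp (S.P m)) x := rfl
    _ = S.P m x := by rw [this]
  · -- m' < m : P m' (P m x) = P m' x
    have hmin : min m' m = m' := by omega
    rw [hmin]
    apply P_congr S hm'
    apply linf_ext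
    intro t
    rw [S.hpi, S.hpi]
    split
    · exact P_coord_low S hm (by omega) (le_trans (by omega : t ≤ S.d m') (d_mono S hm' h.le)) x
    · rfl

end Lemmas4
section Lemmas5
variable (S : BDSetup)

theorem coh {r n ℓ : ℕ} (hr : 1 ≤ r) (hrn : r ≤ n) (hn : 2 ≤ n) (h1 : S.d n < ℓ)
    (h2 : ℓ ≤ S.d (n + 1)) (x : linf) :
    S.P r x ℓ = S.a * ((S.φ ℓ).1 : ℝ) * S.P r x (S.φ ℓ).2.1
      + S.b * (((S.φ ℓ).2.2.2.1 : ℤ) : ℝ) *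
        (S.P r x (S.φ ℓ).2.2.2.2 - S.P (S.φ ℓ).2.2.1 (S.P r x) (S.φ ℓ).2.2.2.2) := by
  obtain ⟨-, -, hm'1, hm'n, hi1, hi2, hj1, hj2⟩ := phi_spec S hn h1 h2
  have main : ∀ w : linf, w ∈ Esub S.d n → (∀ t, 1 ≤ t → t ≤ S.d n → S.P r x t = w t) →
      S.P r x ℓ = S.iMap n (n + 1) w ℓ → S.P r x ℓ = S.a * ((S.φ ℓ).1 : ℝ) * S.P r x (S.φ ℓ).2.1
        + S.b * (((S.φ ℓ).2.2.2.1 : ℤ) : ℝ) *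
          (S.P r x (S.φ ℓ).2.2.2.2 - S.P (S.φ ℓ).2.2.1 (S.P r x) (S.φ ℓ).2.2.2.2) := by
    intro w hw hwc hweq
    rw [hweq, step_apply S hn hw ℓ, if_pos ⟨h1, h2⟩,
      Esub_coord_eq_zero hw (t := ℓ) (by omega), zero_add]
    have hsub : ((w - S.iMap (S.φ ℓ).2.2.1 n (S.pi (S.φ ℓ).2.2.1 w) : linf)) (S.φ ℓ).2.2.2.2
        = w (S.φ ℓ).2.2.2.2 - (S.iMap (S.φ ℓ).2.2.1 n (S.pi (S.φ ℓ).2.2.1 w) : linf) (S.φ ℓ).2.2.2.2 :=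
      congrFun (lp.coeFn_sub _ _) _
    have hpiw : S.pi (S.φ ℓ).2.2.1 w = S.pi (S.φ ℓ).2.2.1 (S.P r x) := by
      apply linf_ext
      intro t
      rw [S.hpi, S.hpi]
      split
      · next hcond => exact (hwc t hcond.1 (hcond.2.trans (d_mono S hm'1 hm'n.le))).symm
      · rfl
    have hPm' : S.P (S.φ ℓ).2.2.1 (S.P r x) (S.φ ℓ).2.2.2.2
        = S.iMap (S.φ ℓ).2.2.1 n (S.pi (S.φ ℓ).2.2.1 (S.P r x)) (S.φ ℓ).2.2.2.2 :=
      P_coord S hm'1 hm'n hj2 (S.P r x)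
    rw [hsub, hPm', ← hpiw, hwc (S.φ ℓ).2.1 hi1 (hi2.trans (d_mono S hm'1 hm'n.le)),
      hwc (S.φ ℓ).2.2.2.2 hj1 hj2]
  rcases eq_or_lt_of_le hrn with heq | hlt
  · subst heq
    refine main (S.pi r x) (pi_mem S r x) (fun t ht1 ht2 => ?_) ?_
    · rw [S.hpi, if_pos ⟨ht1, ht2⟩]
      exact P_coord_low S hr ht1 ht2 x
    · exact P_coord S hr (Nat.lt_succ_self r) h2 x
  · refine main (S.iMap r n (S.pi r x)) (iMap_mem S hr hlt (pi_mem S r x))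
      (fun t ht1 ht2 => P_coord S hr hlt ht2 x) ?_
    rw [P_coord S hr (hlt.trans (Nat.lt_succ_self n)) h2 x,
      S.hicomp r n hr hlt _ (pi_mem S r x)]

end Lemmas5
section Lemmas6
variable (S : BDSetup)

theorem P_min (S : BDSetup) {s : ℕ} (hs : 1 ≤ s) {x : linf} (hx : S.P s x = x) (mm : ℕ) :
    S.P mm x = S.P (min mm s) x := by
  rcases Nat.eq_zero_or_pos mm with h0 | h0
  · subst h0; rw [Nat.zero_min]
  · conv_lhs => rw [← hx]
    rw [PP S h0 hs x]

theorem tele3 {s : ℕ} (hs : 1 ≤ s) {x : linf} (hx : S.P s x = x) (m : ℕ) {ℓ : ℕ}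
    (h3 : 2 < ℓ) (hds : S.d s < ℓ) :
    x ℓ - S.P m x ℓ =
      (if (S.φ ℓ).1 = -1 then -S.a else S.a) * (x (S.φ ℓ).2.1 - S.P m x (S.φ ℓ).2.1)
      + (if (S.φ ℓ).2.2.2.1 = -1 then -S.b else S.b) *
        (x (S.φ ℓ).2.2.2.2 - S.P (max m (S.φ ℓ).2.2.1) x (S.φ ℓ).2.2.2.2) := by
  obtain ⟨n, hn, h1, h2⟩ := exists_interval S h3
  obtain ⟨hσ', hσ'', hm'1, hm'n, hi1, hi2, hj1, hj2⟩ := phi_spec S hn h1 h2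
  have hsn : s ≤ n := by
    by_contra h
    push_neg at h
    have := d_mono S (by omega : 1 ≤ n + 1) (by omega : n + 1 ≤ s)
    omega
  have hifa : (if (S.φ ℓ).1 = -1 then -S.a else S.a) = S.a * ((S.φ ℓ).1 : ℝ) := by
    rcases hσ' with h | h <;> rw [h] <;> norm_num
  have hifb : (if (S.φ ℓ).2.2.2.1 = -1 then -S.b else S.b)
      = S.b * (((S.φ ℓ).2.2.2.1 : ℤ) : ℝ) := by
    rcases hσ'' with h | h <;> rw [h] <;> norm_num
  rw [hifa, hifb]
  have A := coh S hs hsn hn h1 h2 x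
  rw [hx] at A
  rw [P_min S hs hx (S.φ ℓ).2.2.1] at A
  set p := min (S.φ ℓ).2.2.1 s with hp
  set q := min m s with hq
  have B : S.P q x ℓ = S.a * ((S.φ ℓ).1 : ℝ) * S.P q x (S.φ ℓ).2.1
      + S.b * (((S.φ ℓ).2.2.2.1 : ℤ) : ℝ) *
        (S.P q x (S.φ ℓ).2.2.2.2 - S.P (min p q) x (S.φ ℓ).2.2.2.2) := by
    rcases Nat.eq_zero_or_pos q with h0 | h0
    · have hpq0 : min p q = 0 := by omega
      rw [hpq0, h0]
      simp only [P_zero_apply]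
      ring
    · have B0 := coh S h0 (le_trans (by omega : q ≤ s) hsn) hn h1 h2 x
      have C : S.P (S.φ ℓ).2.2.1 (S.P q x) = S.P (min p q) x := by
        rw [PP S hm'1 h0 x, show min (S.φ ℓ).2.2.1 q = min p q by omega]
      rw [C] at B0
      exact B0
  rw [P_min S hs hx m, ← hq, P_min S hs hx (max m (S.φ ℓ).2.2.1),
    show min (max m (S.φ ℓ).2.2.1) s = max p q by omega]
  rcases le_total p q with hpq | hpq
  · rw [min_eq_left hpq] at B
    rw [max_eq_right hpq]
    linear_combination A - B
  · rw [min_eq_right hpq] at B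
    rw [max_eq_left hpq]
    linear_combination A - B

theorem tele2 {s : ℕ} (hs : 1 ≤ s) {x : linf} (hx : S.P s x = x) (m : ℕ) {ℓ : ℕ}
    (hl : ℓ ≤ 2) (hds : S.d s < ℓ) : x ℓ - S.P m x ℓ = 0 := by
  have hds1 : S.d s = 1 := by have := d_pos S hs; omega
  have hl2 : ℓ = 2 := by omega
  have hs1 : s = 1 := by
    by_contra h
    have h2 : 2 ≤ s := by omega
    have := d_mono S (by omega : 1 ≤ 2) h2
    rw [S.hd2] at this
    omega
  subst hs1 hl2
  rcases Nat.eq_zero_or_pos m with h0 | h0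
  · subst h0
    rw [P_zero_apply, _root_.sub_zero, ← hx,
      P_coord S (by omega) (by omega : 1 < 2) (by rw [S.hd2]) x,
      S.hi12 _ (pi_mem S 1 x), S.hpi, if_neg (by rw [S.hd1]; omega)]
  · have hPm : S.P m x = x := by
      rw [P_min S hs hx m, show min m 1 = 1 by omega, hx]
    rw [hPm, _root_.sub_self]

end Lemmas6
section Lemmas7
variable (S : BDSetup)

theorem bdWalk_append (w : ℝ × ℕ × ℕ) (N : List Bool) (δ : Bool) :
    bdWalk S w (N ++ [δ]) = bdStep S (bdWalk S w N) δ := by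
  induction N generalizing w with
  | nil => rfl
  | cons a N ih => exact ih (bdStep S w a)

theorem gElem_append (k : ℕ) (N : List Bool) (δ : Bool) :
    gElem S k (N ++ [δ]) = bdStep S (gElem S k N) δ :=
  bdWalk_append S _ N δ

theorem good_R {k s : ℕ} (hs : 1 ≤ s) {N : List Bool} (hN : GoodNode S (gElem S k) s N) :
    ∀ t, t < N.length → (gElem S k (N.take t)).2.2 + t ≤ k := by
  intro t
  induction t with
  | zero => intro _; simp [gElem, bdWalk]
  | succ t ih =>
    intro ht
    have ht' : t < N.length := by omega
    have hIH := ih ht'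
    have htake : N.take (t + 1) = N.take t ++ [N[t]] := by
      rw [List.take_succ, List.getElem?_eq_getElem ht']
      rfl
    have hgood := hN (t + 1) ht
    rw [htake, gElem_append] at hgood ⊢
    set w := gElem S k (N.take t) with hw
    by_cases hw2 : w.2.2 ≤ 2
    · exfalso
      have hdpos := d_pos S hs
      simp only [bdStep, if_pos hw2] at hgood
      omega
    · push_neg at hw2
      obtain ⟨n, hn, h1, h2⟩ := exists_interval S hw2
      obtain ⟨-, -, hm'1, hm'n, hi1, hi2, hj1, hj2⟩ := phi_spec S hn h1 h2
      have hdm' : S.d (S.φ w.2.2).2.2.1 ≤ S.d n := d_mono S hm'1 hm'n.le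
      have hstep : (bdStep S w N[t]).2.2 ≤ S.d n := by
        simp only [bdStep, if_neg (by omega : ¬ w.2.2 ≤ 2)]
        cases N[t] <;> simp <;> omega
      omega

theorem good_len {k s : ℕ} (hk : 1 ≤ k) (hs : 1 ≤ s) {N : List Bool}
    (hN : GoodNode S (gElem S k) s N) : N.length ≤ k := by
  rcases Nat.eq_zero_or_pos N.length with h0 | h0
  · omega
  · have hR := good_R S hs hN (N.length - 1) (by omega)
    have hg := hN (N.length - 1) (by omega)
    have := d_pos S hs
    omega

end Lemmas7
section Lemmas8
variable (S : BDSetup)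

theorem coord_sub_P (m t : ℕ) (x : linf) :
    coordFn t ((ContinuousLinearMap.id ℝ linf - S.P m) x) = x t - S.P m x t := by
  rw [coordFn_apply, ContinuousLinearMap.sub_apply, ContinuousLinearMap.id_apply]
  exact congrFun (lp.coeFn_sub x (S.P m x)) t

theorem nodeVal_split (k : ℕ) {s : ℕ} (hs : 1 ≤ s) {x : linf} (hx : S.P s x = x)
    (N : List Bool) (hRN : S.d s < (gElem S k N).2.2) :
    nodeVal S (gElem S k) (N ++ [false]) x + nodeVal S (gElem S k) (N ++ [true]) x
      = nodeVal S (gElem S k) N x := by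
  unfold nodeVal
  have hlen : ∀ δ : Bool, (N ++ [δ]).length = N.length + 1 := by simp
  have hprod : ∀ δ : Bool,
      (∏ t ∈ Finset.range ((N ++ [δ]).length), (gElem S k ((N ++ [δ]).take (t + 1))).1)
      = (∏ t ∈ Finset.range N.length, (gElem S k (N.take (t + 1))).1)
        * (bdStep S (gElem S k N) δ).1 := by
    intro δ
    rw [hlen, Finset.prod_range_succ]
    congr 1
    · refine Finset.prod_congr rfl fun t ht => ?_
      rw [Finset.mem_range] at ht
      rw [List.take_append_of_le_length (by omega)]
    · rw [show (N ++ [δ]).take (N.length + 1) = N ++ [δ] from by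
        rw [← hlen δ]; exact List.take_length, gElem_append]
  rw [hprod, hprod, gElem_append, gElem_append]
  set w := gElem S k N with hw
  set Pi := ∏ t ∈ Finset.range N.length, (gElem S k (N.take (t + 1))).1 with hPi
  by_cases hw2 : w.2.2 ≤ 2
  · have hstep : ∀ δ : Bool, bdStep S w δ = (0, w.2.1, 0) := by
      intro δ; simp [bdStep, hw2]
    simp only [hstep, coord_sub_P]
    rw [tele2 S hs hx w.2.1 hw2 hRN]
    simp
  · push_neg at hw2
    have hnle : ¬ w.2.2 ≤ 2 := by omega
    have hsf : bdStep S w false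
        = (if (S.φ w.2.2).1 = -1 then -S.a else S.a, w.2.1, (S.φ w.2.2).2.1) := by
      simp [bdStep, hnle]
    have hst : bdStep S w true
        = (if (S.φ w.2.2).2.2.2.1 = -1 then -S.b else S.b,
            max w.2.1 (S.φ w.2.2).2.2.1, (S.φ w.2.2).2.2.2.2) := by
      simp [bdStep, hnle]
    rw [hsf, hst]
    simp only []
    rw [coord_sub_P, coord_sub_P, coord_sub_P, tele3 S hs hx w.2.1 hw2 hRN]
    ring

end Lemmas8
/-- Proposition 4.1: if `{N_i}` is a maximal collection of incomparable
admissible nodes, then it is finite and `e_k^*(x) = Σ_i ⟨g_k, N_i, x⟩`. -/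
theorem stmt_14 (S : BDSetup) (k s : ℕ) (hk : 1 ≤ k) (hs : 1 ≤ s)
    (x : linf) (hx : x ∈ (S.P s) '' ((Xsub S : Submodule ℝ linf) : Set linf))
    (𝒩 : Set (List Bool))
    (hgood : ∀ N ∈ 𝒩, GoodNode S (gElem S k) s N)
    (hantichain : ∀ N ∈ 𝒩, ∀ M ∈ 𝒩, N ≠ M → ¬ N <+: M ∧ ¬ M <+: N)
    (hmax : ∀ N : List Bool, GoodNode S (gElem S k) s N →
      ∃ M ∈ 𝒩, M <+: N ∨ N <+: M) :
    ∃ hfin : 𝒩.Finite,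
      coordFn k x = ∑ N ∈ hfin.toFinset, nodeVal S (gElem S k) N x := by
  have hxfix : S.P s x = x := by
    obtain ⟨u, -, rfl⟩ := hx
    have h := ContinuousLinearMap.ext_iff.mp (S.hPproj s) u
    rwa [ContinuousLinearMap.comp_apply] at h
  clear hx
  have hfin : 𝒩.Finite :=
    (List.finite_length_le Bool k).subset fun N hN => good_len S hk hs (hgood N hN)
  refine ⟨hfin, ?_⟩
  have key : ∀ (c : ℕ) (N : List Bool), GoodNode S (gElem S k) s N → k + 1 ≤ N.length + c →
      (∀ M ∈ 𝒩, M <+: N → M = N) →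
      (∑ M ∈ hfin.toFinset.filter (fun M => N <+: M), nodeVal S (gElem S k) M x)
        = nodeVal S (gElem S k) N x := by
    intro c
    induction c with
    | zero =>
      intro N hgN hlen _
      exact absurd (good_len S hk hs hgN) (by omega)
    | succ c ih =>
      intro N hgN hlen hpref
      by_cases hN𝒩 : N ∈ 𝒩
      · have hfilter : hfin.toFinset.filter (fun M => N <+: M) = {N} := by
          apply Finset.ext
          intro M
          simp only [Finset.mem_filter, Set.Finite.mem_toFinset, Finset.mem_singleton]
          constructor
          · rintro ⟨hM, hNM⟩
            by_contra hne
            exact (hantichain N hN𝒩 M hM (fun h => hne h.symm)).1 hNM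
          · rintro rfl
            exact ⟨hN𝒩, List.prefix_refl _⟩
        rw [hfilter, Finset.sum_singleton]
      · obtain ⟨M₀, hM₀, hcomp⟩ := hmax N hgN
        have hne : N ≠ M₀ := fun he => hN𝒩 (by rw [he]; exact hM₀)
        have hNM₀ : N <+: M₀ := by
          rcases hcomp with h | h
          · exact absurd (hpref M₀ hM₀ h).symm hne
          · exact h
        have hlenN : N.length < M₀.length := by
          rcases eq_or_lt_of_le hNM₀.length_le with he | hlt
          · exact absurd (hNM₀.eq_of_length he) hne
          · exact hlt
        have hRN : S.d s < (gElem S k N).2.2 := by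
          have hgM := hgood M₀ hM₀ N.length hlenN
          obtain ⟨u', hu'⟩ := hNM₀
          rw [← hu', List.take_left] at hgM
          exact hgM
        have hchildgood : ∀ δ : Bool, GoodNode S (gElem S k) s (N ++ [δ]) := by
          intro δ t ht
          rw [List.length_append, List.length_singleton] at ht
          rcases lt_or_ge t N.length with h | h
          · rw [List.take_append_of_le_length (by omega)]
            exact hgN t h
          · have ht' : t = N.length := by omega
            subst ht'
            rw [List.take_append_of_le_length (le_refl _), List.take_length]
            exact hRN
        have hchildpref : ∀ δ : Bool, ∀ M ∈ 𝒩, M <+: N ++ [δ] → M = N ++ [δ] := by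
          intro δ M hM hMp
          by_contra hne'
          have h1 := hMp.length_le
          rw [List.length_append, List.length_singleton] at h1
          rcases eq_or_lt_of_le h1 with he | hlt
          · exact hne' (hMp.eq_of_length
              (by rw [List.length_append, List.length_singleton]; exact he))
          · have hMN : M <+: N :=
              List.prefix_of_prefix_length_le hMp (List.prefix_append N [δ]) (by omega)
            exact hN𝒩 ((hpref M hM hMN) ▸ hM)
        have hchildlen : ∀ δ : Bool, k + 1 ≤ (N ++ [δ]).length + c := by
          intro δ
          rw [List.length_append, List.length_singleton]
          omega
        have hsum : hfin.toFinset.filter (fun M => N <+: M)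
            = hfin.toFinset.filter (fun M => N ++ [false] <+: M)
              ∪ hfin.toFinset.filter (fun M => N ++ [true] <+: M) := by
          apply Finset.ext
          intro M
          simp only [Finset.mem_union, Finset.mem_filter, Set.Finite.mem_toFinset]
          constructor
          · rintro ⟨hM, hNM⟩
            obtain ⟨u', rfl⟩ := hNM
            have hu' : u' ≠ [] := by
              rintro rfl
              exact hN𝒩 (by simpa using hM)
            obtain ⟨δ, u'', rfl⟩ : ∃ δ u'', u' = δ :: u'' := by
              cases u' with
              | nil => exact absurd rfl hu'
              | cons a l => exact ⟨a, l, rfl⟩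
            cases δ
            · exact Or.inl ⟨hM, ⟨u'', by simp⟩⟩
            · exact Or.inr ⟨hM, ⟨u'', by simp⟩⟩
          · rintro (⟨hM, hNM⟩ | ⟨hM, hNM⟩) <;>
              exact ⟨hM, (List.prefix_append N _).trans hNM⟩
        have hdisj : Disjoint (hfin.toFinset.filter (fun M => N ++ [false] <+: M))
            (hfin.toFinset.filter (fun M => N ++ [true] <+: M)) := by
          rw [Finset.disjoint_left]
          rintro M hM0 hM1
          simp only [Finset.mem_filter] at hM0 hM1
          have h01 := List.prefix_of_prefix_length_le hM0.2 hM1.2 (by simp)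
          have heq := h01.eq_of_length (by simp)
          simp at heq
        rw [hsum, Finset.sum_union hdisj,
          ih _ (hchildgood false) (hchildlen false) (hchildpref false),
          ih _ (hchildgood true) (hchildlen true) (hchildpref true)]
        exact nodeVal_split S k hs hxfix N hRN
  have hroot := key (k + 1) [] (by intro t ht; simp at ht) (by simp)
    (by intro M hM hMp; simpa using hMp)
  have hfull : hfin.toFinset.filter (fun M => ([] : List Bool) <+: M) = hfin.toFinset :=
    Finset.filter_true_of_mem fun M _ => List.nil_prefix
  rw [hfull] at hroot
  rw [hroot]
  unfold nodeVal
  simp only [List.length_nil, Finset.range_zero, Finset.prod_empty, one_mul]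
  have : (gElem S k []).2.1 = 0 := rfl
  rw [show (gElem S k []).2.2 = k from rfl, this, S.hP0, _root_.sub_zero,
    ContinuousLinearMap.id_apply]
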